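/- Let S(t) be a C⁰ contraction semigroup on a Hilbert space H and define H_u = {U ∈ H : ‖S(t)U‖ = ‖U‖ = ‖S*(t)U‖ for all t ≥ 0}. Then H_u is a closed linear subspace of H invariant under every S(t). -/

import Mathlib

open ContinuousLinearMap
open scoped RealInnerProductSpace

lemma adjoint_norm_le {H : Type*} [NormedAddCommGroup H] [InnerProductSpace ℝ H]
    [CompleteSpace H] (T : H →L[ℝ] H) (hT : ‖T‖ ≤ 1) (x : H) :
    ‖ContinuousLinearMap.adjoint T x‖ ≤ ‖x‖ := by
  calc ‖ContinuousLinearMap.adjoint T x‖ ≤ ‖ContinuousLinearMap.adjoint T‖ * ‖x‖ :=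
        (ContinuousLinearMap.adjoint T).le_opNorm x
    _ ≤ 1 * ‖x‖ := by
        have : ‖ContinuousLinearMap.adjoint T‖ = ‖T‖ := ContinuousLinearMap.adjoint.norm_map T
        rw [this]
        exact mul_le_mul_of_nonneg_right hT (norm_nonneg x)
    _ = ‖x‖ := one_mul _

lemma key_adjoint_comp {H : Type*} [NormedAddCommGroup H] [InnerProductSpace ℝ H]
    [CompleteSpace H] (T : H →L[ℝ] H) (hT : ‖T‖ ≤ 1) (x : H) (hx : ‖T x‖ = ‖x‖) :
    ContinuousLinearMap.adjoint T (T x) = x := by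
  have h1 : ‖ContinuousLinearMap.adjoint T (T x)‖ ≤ ‖x‖ := by
    calc ‖ContinuousLinearMap.adjoint T (T x)‖ ≤ ‖T x‖ := adjoint_norm_le T hT _
      _ = ‖x‖ := hx
  have h2 : (inner ℝ (ContinuousLinearMap.adjoint T (T x)) x : ℝ) = ‖x‖ ^ 2 := by
    rw [ContinuousLinearMap.adjoint_inner_left, real_inner_self_eq_norm_sq, hx]
  have h3 : ‖ContinuousLinearMap.adjoint T (T x) - x‖ ^ 2 ≤ 0 := by
    rw [@norm_sub_sq_real]
    nlinarith [norm_nonneg (ContinuousLinearMap.adjoint T (T x)), norm_nonneg x]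
  have h4 : ‖ContinuousLinearMap.adjoint T (T x) - x‖ = 0 := by
    nlinarith [norm_nonneg (ContinuousLinearMap.adjoint T (T x) - x)]
  rw [← sub_eq_zero]
  exact norm_eq_zero.mp h4

lemma key_comp_adjoint {H : Type*} [NormedAddCommGroup H] [InnerProductSpace ℝ H]
    [CompleteSpace H] (T : H →L[ℝ] H) (hT : ‖T‖ ≤ 1) (x : H)
    (hx : ‖ContinuousLinearMap.adjoint T x‖ = ‖x‖) :
    T (ContinuousLinearMap.adjoint T x) = x := by
  have h := key_adjoint_comp (ContinuousLinearMap.adjoint T)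
    (by rw [ContinuousLinearMap.adjoint.norm_map]; exact hT) x hx
  rwa [ContinuousLinearMap.adjoint_adjoint] at h

theorem isometric_subspace_closed_invariant
    {H : Type*} [NormedAddCommGroup H] [InnerProductSpace ℝ H] [CompleteSpace H]
    (S : ℝ → H →L[ℝ] H)
    (hS0 : S 0 = 1)
    (hSsem : ∀ s t : ℝ, 0 ≤ s → 0 ≤ t → S (s + t) = S s ∘L S t)
    (hScontr : ∀ t : ℝ, 0 ≤ t → ‖S t‖ ≤ 1) :
    let Hu : Set H := {U | ∀ t : ℝ, 0 ≤ t →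
      ‖S t U‖ = ‖U‖ ∧ ‖ContinuousLinearMap.adjoint (S t) U‖ = ‖U‖}
    (0 : H) ∈ Hu ∧
    (∀ U V, U ∈ Hu → V ∈ Hu → U + V ∈ Hu) ∧
    (∀ (c : ℝ) U, U ∈ Hu → c • U ∈ Hu) ∧
    IsClosed Hu ∧
    (∀ t : ℝ, 0 ≤ t → ∀ U ∈ Hu, S t U ∈ Hu) := by
  intro Hu
  have haSle : ∀ t : ℝ, 0 ≤ t → ∀ x : H, ‖ContinuousLinearMap.adjoint (S t) x‖ ≤ ‖x‖ :=
    fun t ht x => adjoint_norm_le (S t) (hScontr t ht) x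
  have hSle : ∀ t : ℝ, 0 ≤ t → ∀ x : H, ‖S t x‖ ≤ ‖x‖ := by
    intro t ht x
    calc ‖S t x‖ ≤ ‖S t‖ * ‖x‖ := (S t).le_opNorm x
      _ ≤ 1 * ‖x‖ := mul_le_mul_of_nonneg_right (hScontr t ht) (norm_nonneg x)
      _ = ‖x‖ := one_mul _
  refine ⟨?_, ?_, ?_, ?_, ?_⟩
  · intro t ht; simp
  · -- addition
    intro U V hU hV t ht
    have hUt := hU t ht
    have hVt := hV t ht
    have h1 : ContinuousLinearMap.adjoint (S t) (S t (U + V)) = U + V := by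
      rw [map_add, map_add, key_adjoint_comp (S t) (hScontr t ht) U hUt.1,
        key_adjoint_comp (S t) (hScontr t ht) V hVt.1]
    have h2 : S t (ContinuousLinearMap.adjoint (S t) (U + V)) = U + V := by
      rw [map_add, map_add, key_comp_adjoint (S t) (hScontr t ht) U hUt.2,
        key_comp_adjoint (S t) (hScontr t ht) V hVt.2]
    constructor
    · refine le_antisymm (hSle t ht _) ?_
      calc ‖U + V‖ = ‖ContinuousLinearMap.adjoint (S t) (S t (U + V))‖ := by rw [h1]
        _ ≤ ‖S t (U + V)‖ := haSle t ht _
    · refine le_antisymm (haSle t ht _) ?_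
      calc ‖U + V‖ = ‖S t (ContinuousLinearMap.adjoint (S t) (U + V))‖ := by rw [h2]
        _ ≤ ‖ContinuousLinearMap.adjoint (S t) (U + V)‖ := hSle t ht _
  · -- smul
    intro c U hU t ht
    have hUt := hU t ht
    constructor
    · rw [map_smul, norm_smul, norm_smul, hUt.1]
    · rw [map_smul, norm_smul, norm_smul, hUt.2]
  · -- closed
    have : Hu = ⋂ (t : ℝ) (_ : 0 ≤ t),
        ({U : H | ‖S t U‖ = ‖U‖} ∩ {U : H | ‖ContinuousLinearMap.adjoint (S t) U‖ = ‖U‖}) := by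
      ext U
      simp only [Set.mem_iInter, Set.mem_inter_iff, Set.mem_setOf_eq]
      constructor
      · intro h t ht; exact h t ht
      · intro h t ht; exact h t ht
    rw [this]
    refine isClosed_iInter fun t => isClosed_iInter fun ht => IsClosed.inter ?_ ?_
    · exact isClosed_eq (continuous_norm.comp (S t).continuous) continuous_norm
    · exact isClosed_eq (continuous_norm.comp (ContinuousLinearMap.adjoint (S t)).continuous)
        continuous_norm
  · -- invariance
    intro t ht U hU s hs
    have hUnorm : ‖S t U‖ = ‖U‖ := (hU t ht).1
    constructor
    · have : S s (S t U) = S (s + t) U := by rw [hSsem s t hs ht]; rfl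
      rw [this, (hU (s + t) (by linarith)).1, hUnorm]
    · rw [hUnorm]
      rcases le_total s t with hst | hst
      · -- s ≤ t : lower/upper bound argument
        have hts : (0:ℝ) ≤ t - s := by linarith
        have hcomp : S t = S s ∘L S (t - s) := by
          have := hSsem s (t - s) hs hts
          rwa [show s + (t - s) = t by ring] at this
        refine le_antisymm ((haSle s hs _).trans (le_of_eq hUnorm)) ?_
        have hadj : ContinuousLinearMap.adjoint (S t)
            = ContinuousLinearMap.adjoint (S (t - s)) ∘L ContinuousLinearMap.adjoint (S s) := by
          rw [hcomp, ContinuousLinearMap.adjoint_comp]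
        have hlow : ContinuousLinearMap.adjoint (S (t - s))
            (ContinuousLinearMap.adjoint (S s) (S t U)) = U := by
          have h1 : ContinuousLinearMap.adjoint (S t) (S t U) = U :=
            key_adjoint_comp (S t) (hScontr t ht) U hUnorm
          have h2 : ContinuousLinearMap.adjoint (S (t - s))
              (ContinuousLinearMap.adjoint (S s) (S t U))
              = ContinuousLinearMap.adjoint (S t) (S t U) := by rw [hadj]; rfl
          rw [h2, h1]
        calc ‖U‖ = ‖ContinuousLinearMap.adjoint (S (t - s))
              (ContinuousLinearMap.adjoint (S s) (S t U))‖ := by rw [hlow]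
          _ ≤ ‖ContinuousLinearMap.adjoint (S s) (S t U)‖ := haSle (t - s) hts _
      · -- t ≤ s : explicit computation
        have hst' : (0:ℝ) ≤ s - t := by linarith
        have hcomp : S s = S t ∘L S (s - t) := by
          have := hSsem t (s - t) ht hst'
          rwa [show t + (s - t) = s by ring] at this
        have heq : ContinuousLinearMap.adjoint (S s) (S t U)
            = ContinuousLinearMap.adjoint (S (s - t)) U := by
          rw [hcomp, ContinuousLinearMap.adjoint_comp]
          show ContinuousLinearMap.adjoint (S (s - t))
            (ContinuousLinearMap.adjoint (S t) (S t U)) = _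
          rw [key_adjoint_comp (S t) (hScontr t ht) U hUnorm]
        rw [heq, (hU (s - t) hst').2]
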